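/- Let x be a signal with support {0,…,N-1} and 𝓕x(ω) = C ∏_{j=1}^{N-1}(e^{-iω} - β_j), all β_j ≠ 0. Then the conjugated and reflected signal y[n] = conj(x[N-1-n]) (shifted to have support {0,…,N-1}) satisfies 𝓕y(ω) = C' ∏_{j=1}^{N-1}(e^{-iω} - 1/conj(β_j)) for some constant C' with |C'|² ∏_j |1/conj(β_j)| = |C|² ∏_j |β_j|. -/

import Mathlib

open Complex

theorem conj_reflected_signal_zeros
    (N : ℕ) (hN : 1 ≤ N) (x : ℤ → ℂ)
    (hsupp : ∀ n : ℤ, (n < 0 ∨ (N : ℤ) ≤ n) → x n = 0)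
    (C : ℂ) (hC : C ≠ 0) (β : ℕ → ℂ) (hβ : ∀ j < N - 1, β j ≠ 0)
    (hx : ∀ ω : ℝ,
      ∑ n ∈ Finset.range N, x n * Complex.exp (-Complex.I * (ω : ℂ) * (n : ℂ))
        = C * ∏ j ∈ Finset.range (N - 1), (Complex.exp (-Complex.I * (ω : ℂ)) - β j))
    (y : ℤ → ℂ) (hy : ∀ n : ℤ, y n = (starRingEnd ℂ) (x ((N : ℤ) - 1 - n))) :
    ∃ C' : ℂ,
      (∀ ω : ℝ,
        ∑ n ∈ Finset.range N, y n * Complex.exp (-Complex.I * (ω : ℂ) * (n : ℂ))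
          = C' * ∏ j ∈ Finset.range (N - 1),
              (Complex.exp (-Complex.I * (ω : ℂ)) - 1 / (starRingEnd ℂ) (β j))) ∧
      ‖C'‖ ^ 2 *
          ∏ j ∈ Finset.range (N - 1), ‖1 / (starRingEnd ℂ) (β j)‖
        = ‖C‖ ^ 2 * ∏ j ∈ Finset.range (N - 1), ‖β j‖ := by
  refine ⟨(starRingEnd ℂ) C * ∏ j ∈ Finset.range (N - 1), (-(starRingEnd ℂ) (β j)), ?_, ?_⟩
  · intro ω
    set z : ℂ := Complex.exp (-Complex.I * (ω : ℂ)) with hz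
    have hzne : z ≠ 0 := Complex.exp_ne_zero _
    have hconjz : (starRingEnd ℂ) z = z⁻¹ := by
      rw [hz, ← Complex.exp_conj, ← Complex.exp_neg]
      congr 1
      simp [Complex.conj_ofReal]
    have hpow : ∀ n : ℕ, Complex.exp (-Complex.I * (ω : ℂ) * (n : ℂ)) = z ^ n := by
      intro n
      rw [show -Complex.I * (ω : ℂ) * (n : ℂ) = (n : ℂ) * (-Complex.I * (ω : ℂ)) by ring,
        Complex.exp_nat_mul]
    -- step 1: reflect the sum
    have h1 : ∑ n ∈ Finset.range N, y n * Complex.exp (-Complex.I * (ω : ℂ) * (n : ℂ))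
        = ∑ n ∈ Finset.range N, (starRingEnd ℂ) (x n) * z ^ (N - 1 - n) := by
      rw [← Finset.sum_range_reflect (fun n => (starRingEnd ℂ) (x n) * z ^ (N - 1 - n)) N]
      refine Finset.sum_congr rfl fun n hn => ?_
      rw [Finset.mem_range] at hn
      rw [hy, hpow, show (N : ℤ) - 1 - (n : ℤ) = ((N - 1 - n : ℕ) : ℤ) by omega,
        Nat.sub_sub_self (by omega : n ≤ N - 1)]
    -- step 2: pull out z^(N-1) and conjugate
    have h2 : ∑ n ∈ Finset.range N, (starRingEnd ℂ) (x n) * z ^ (N - 1 - n)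
        = z ^ (N - 1) * (starRingEnd ℂ)
            (∑ n ∈ Finset.range N, x n * Complex.exp (-Complex.I * (ω : ℂ) * (n : ℂ))) := by
      rw [map_sum, Finset.mul_sum]
      refine Finset.sum_congr rfl fun n hn => ?_
      rw [Finset.mem_range] at hn
      rw [hpow, map_mul, map_pow, hconjz, pow_sub₀ z hzne (by omega : n ≤ N - 1)]
      field_simp
      rw [one_div, inv_pow, mul_assoc, mul_inv_cancel₀ (pow_ne_zero n hzne), mul_one]
    rw [h1, h2, hx ω, map_mul, map_prod]
    have h3 : ∀ j ∈ Finset.range (N - 1),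
        (starRingEnd ℂ) (z - β j) = z⁻¹ - (starRingEnd ℂ) (β j) := by
      intro j hj; rw [map_sub, hconjz]
    rw [Finset.prod_congr rfl h3]
    have hcard : z ^ (N - 1) = ∏ _j ∈ Finset.range (N - 1), z := by
      rw [Finset.prod_const, Finset.card_range]
    rw [hcard]
    rw [show ((starRingEnd ℂ) C * ∏ j ∈ Finset.range (N - 1), (-(starRingEnd ℂ) (β j))) *
        ∏ j ∈ Finset.range (N - 1), (z - 1 / (starRingEnd ℂ) (β j))
        = (starRingEnd ℂ) C * ∏ j ∈ Finset.range (N - 1),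
            ((-(starRingEnd ℂ) (β j)) * (z - 1 / (starRingEnd ℂ) (β j))) by
          rw [Finset.prod_mul_distrib]; ring]
    rw [show (∏ _j ∈ Finset.range (N - 1), z) * ((starRingEnd ℂ) C *
        ∏ j ∈ Finset.range (N - 1), (z⁻¹ - (starRingEnd ℂ) (β j)))
        = (starRingEnd ℂ) C * ∏ j ∈ Finset.range (N - 1),
            (z * (z⁻¹ - (starRingEnd ℂ) (β j))) by
          rw [Finset.prod_mul_distrib]; ring]
    congr 1
    refine Finset.prod_congr rfl fun j hj => ?_
    have hbj : (starRingEnd ℂ) (β j) ≠ 0 := by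
      simp only [map_ne_zero]; exact hβ j (Finset.mem_range.mp hj)
    field_simp
    ring
  · have habs : ‖(starRingEnd ℂ) C * ∏ j ∈ Finset.range (N - 1),
        (-(starRingEnd ℂ) (β j))‖ = ‖C‖ * ∏ j ∈ Finset.range (N - 1),
        ‖β j‖ := by
      rw [norm_mul, norm_prod]
      simp [Complex.norm_conj]
    rw [habs]
    have h4 : ∀ j ∈ Finset.range (N - 1),
        ‖1 / (starRingEnd ℂ) (β j)‖ = (‖β j‖)⁻¹ := by
      intro j hj
      rw [norm_div, norm_one, Complex.norm_conj, one_div]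
    rw [Finset.prod_congr rfl h4, Finset.prod_inv_distrib]
    have hP : ∏ j ∈ Finset.range (N - 1), ‖β j‖ ≠ 0 :=
      Finset.prod_ne_zero_iff.mpr fun j hj => by
        simp [norm_ne_zero_iff]; exact hβ j (Finset.mem_range.mp hj)
    field_simp
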